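/- Let 0 < α < 1, let A > 0, B > 0 be real, and let n ≥ 1 be a natural number. Then the limit as ε → 0⁺ of (1/Γ(1−α)) · ∫_0^ε n·α·B·t^(α−1)·(A + B·t^α)^(n−1)·(ε−t)^(−α) dt exists and equals n·Γ(α+1)·A^(n−1)·B. That is, the Caputo fractional derivative of order α of the function ε ↦ (A + B·ε^α)^n tends to n·Γ(α+1)·A^(n−1)·B as ε → 0⁺. -/

import Mathlib

open intervalIntegral MeasureTheory Set

lemma beta_integrable {α ε : ℝ} (hα0 : 0 < α) (hα1 : α < 1) (hε : 0 < ε) :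
    IntervalIntegrable (fun t => t ^ (α - 1) * (ε - t) ^ (-α)) volume 0 ε := by
  apply IntervalIntegrable.trans (b := ε / 2)
  · apply IntervalIntegrable.mul_continuousOn
    · exact intervalIntegrable_rpow' (by linarith)
    · intro t ht
      rw [uIcc_of_le (by linarith)] at ht
      exact ContinuousAt.continuousWithinAt <|
        ((continuous_const.sub continuous_id).continuousAt).rpow_const
          (Or.inl (ne_of_gt (by simp only [Pi.sub_apply, id_eq]; nlinarith [ht.2])))
  · apply IntervalIntegrable.continuousOn_mul (f := fun t => (ε - t) ^ (-α))
      (g := fun t => t ^ (α - 1))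
    · have h := ((intervalIntegrable_rpow' (r := -α) (a := 0) (b := ε / 2)
        (by linarith)).comp_sub_left ε).symm
      rw [show ε - 0 = ε by ring, show ε - ε / 2 = ε / 2 by ring] at h
      exact h
    · intro t ht
      rw [uIcc_of_le (by linarith)] at ht
      exact ContinuousAt.continuousWithinAt <|
        (continuous_id.continuousAt).rpow_const
          (Or.inl (ne_of_gt (by simp only [id_eq]; nlinarith [ht.1])))

lemma beta_value {α ε : ℝ} (hα0 : 0 < α) (hα1 : α < 1) (hε : 0 < ε) :
    ∫ t in (0:ℝ)..ε, t ^ (α - 1) * (ε - t) ^ (-α)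
      = Real.Gamma α * Real.Gamma (1 - α) := by
  have hsc := Complex.betaIntegral_scaled (α : ℂ) ((1 - α : ℝ) : ℂ) hε
  have hexp : (α : ℂ) + ((1 - α : ℝ) : ℂ) - 1 = 0 := by push_cast; ring
  rw [hexp, Complex.cpow_zero, one_mul] at hsc
  have hG := Complex.Gamma_mul_Gamma_eq_betaIntegral
    (s := (α : ℂ)) (t := ((1 - α : ℝ) : ℂ)) (by simpa using hα0) (by simp; linarith)
  have hone : (α : ℂ) + ((1 - α : ℝ) : ℂ) = 1 := by push_cast; ring
  rw [hone, Complex.Gamma_one, one_mul] at hG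
  have hre : (∫ x in (0:ℝ)..ε, (x : ℂ) ^ ((α : ℂ) - 1) * ((ε : ℂ) - x) ^ (((1 - α : ℝ) : ℂ) - 1))
      = ((∫ t in (0:ℝ)..ε, t ^ (α - 1) * (ε - t) ^ (-α) : ℝ) : ℂ) := by
    rw [← intervalIntegral.integral_ofReal]
    apply intervalIntegral.integral_congr
    intro x hx
    rw [uIcc_of_le hε.le] at hx
    have e1 : ((x ^ (α - 1) : ℝ) : ℂ) = (x : ℂ) ^ ((α : ℂ) - 1) := by
      rw [Complex.ofReal_cpow hx.1]
      congr 1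
      push_cast; ring
    have e2 : (((ε - x) ^ (-α) : ℝ) : ℂ) = ((ε : ℂ) - x) ^ (((1 - α : ℝ) : ℂ) - 1) := by
      rw [Complex.ofReal_cpow (by linarith [hx.2] : (0:ℝ) ≤ ε - x)]
      congr 1 <;> push_cast <;> ring
    simp only [Complex.ofReal_mul, e1, e2]
  rw [hre] at hsc
  have : ((∫ t in (0:ℝ)..ε, t ^ (α - 1) * (ε - t) ^ (-α) : ℝ) : ℂ)
      = ((Real.Gamma α * Real.Gamma (1 - α) : ℝ) : ℂ) := by
    rw [hsc, ← hG, Complex.Gamma_ofReal, Complex.Gamma_ofReal]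
    norm_cast
  exact_mod_cast this

/-- The Caputo fractional derivative of order `α` (with `0 < α < 1`) of the function
`ε ↦ (A + B ε^α)^n` tends to `n Γ(α+1) A^(n-1) B` as `ε → 0⁺`. -/
theorem stmt_10 (α A B : ℝ) (hα0 : 0 < α) (hα1 : α < 1) (hA : 0 < A) (hB : 0 < B)
    (n : ℕ) (hn : 1 ≤ n) :
    Filter.Tendsto
      (fun ε : ℝ => (1 / Real.Gamma (1 - α)) *
        ∫ t in (0:ℝ)..ε,
          (n : ℝ) * α * B * t ^ (α - 1) * (A + B * t ^ α) ^ (n - 1) * (ε - t) ^ (-α))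
      (nhdsWithin 0 (Set.Ioi 0))
      (nhds ((n : ℝ) * Real.Gamma (α + 1) * A ^ (n - 1) * B)) := by
  have h1α : (0:ℝ) < 1 - α := by linarith
  have hΓpos : 0 < Real.Gamma (1 - α) := Real.Gamma_pos_of_pos h1α
  have hΓα : 0 < Real.Gamma α := Real.Gamma_pos_of_pos hα0
  have hLeq : (n : ℝ) * Real.Gamma (α + 1) * A ^ (n - 1) * B
      = (n : ℝ) * α * Real.Gamma α * B * A ^ (n - 1) := by
    rw [Real.Gamma_add_one hα0.ne']; ring
  apply tendsto_of_tendsto_of_tendsto_of_le_of_le'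
    (g := fun _ : ℝ => (n : ℝ) * Real.Gamma (α + 1) * A ^ (n - 1) * B)
    (h := fun ε : ℝ => (n : ℝ) * α * Real.Gamma α * B * (A + B * ε ^ α) ^ (n - 1))
  · exact tendsto_const_nhds
  · -- upper function tends to the limit
    have hcont : ContinuousAt
        (fun ε : ℝ => (n : ℝ) * α * Real.Gamma α * B * (A + B * ε ^ α) ^ (n - 1)) 0 := by
      exact continuousAt_const.mul ((continuousAt_const.add
        (continuousAt_const.mul (Real.continuousAt_rpow_const 0 α (Or.inr hα0.le)))).pow _)
    have := hcont.tendsto.mono_left (nhdsWithin_le_nhds (s := Set.Ioi (0:ℝ)))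
    rw [hLeq]
    simpa [Real.zero_rpow hα0.ne'] using this
  all_goals filter_upwards [self_mem_nhdsWithin] with ε (hε : (0:ℝ) < ε)
  -- common facts for both inequalities
  all_goals {
    have hbi := beta_integrable hα0 hα1 hε
    have hbv := beta_value hα0 hα1 hε
    have hg : ContinuousOn (fun t : ℝ => (A + B * t ^ α) ^ (n - 1)) (uIcc 0 ε) := by
      intro t _
      exact ContinuousAt.continuousWithinAt ((continuousAt_const.add
        (continuousAt_const.mul (Real.continuousAt_rpow_const t α (Or.inr hα0.le)))).pow _)
    have hInt : IntervalIntegrable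
        (fun t => (n : ℝ) * α * B * t ^ (α - 1) * (A + B * t ^ α) ^ (n - 1) * (ε - t) ^ (-α))
        volume 0 ε := by
      have h := (hbi.mul_continuousOn hg).const_mul ((n : ℝ) * α * B)
      convert h using 1
      funext t; ring
    first
    | -- lower bound : L ≤ f ε
      ( have hIntLo : IntervalIntegrable
            (fun t => (n : ℝ) * α * B * t ^ (α - 1) * A ^ (n - 1) * (ε - t) ^ (-α))
            volume 0 ε := by
          have h := hbi.const_mul ((n : ℝ) * α * B * A ^ (n - 1))
          convert h using 1
          funext t; ring
        have hmono := intervalIntegral.integral_mono_on hε.le hIntLo hInt (by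
          intro t ht
          have ht0 : (0:ℝ) ≤ t := ht.1
          have h1 : A ^ (n - 1) ≤ (A + B * t ^ α) ^ (n - 1) :=
            pow_le_pow_left₀ hA.le
              (by nlinarith [Real.rpow_nonneg ht0 α]) _
          have hc : (0:ℝ) ≤ (n : ℝ) * α * B * t ^ (α - 1) :=
            mul_nonneg (by positivity) (Real.rpow_nonneg ht0 _)
          exact mul_le_mul_of_nonneg_right
            (mul_le_mul_of_nonneg_left h1 hc)
            (Real.rpow_nonneg (by linarith [ht.2]) _))
        have heval : ∫ t in (0:ℝ)..ε,
            (n : ℝ) * α * B * t ^ (α - 1) * A ^ (n - 1) * (ε - t) ^ (-α)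
            = ((n : ℝ) * α * B * A ^ (n - 1)) * (Real.Gamma α * Real.Gamma (1 - α)) := by
          rw [show (fun t : ℝ => (n : ℝ) * α * B * t ^ (α - 1) * A ^ (n - 1) * (ε - t) ^ (-α))
              = fun t : ℝ => ((n : ℝ) * α * B * A ^ (n - 1)) * (t ^ (α - 1) * (ε - t) ^ (-α))
              from funext fun t => by ring] at hIntLo ⊢
          rw [intervalIntegral.integral_const_mul, hbv]
        rw [heval] at hmono
        have hrw : (n : ℝ) * Real.Gamma (α + 1) * A ^ (n - 1) * B
            = (1 / Real.Gamma (1 - α)) *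
              (((n : ℝ) * α * B * A ^ (n - 1)) * (Real.Gamma α * Real.Gamma (1 - α))) := by
          rw [hLeq]; field_simp
        rw [hrw]
        exact mul_le_mul_of_nonneg_left hmono (by positivity) )
    | -- upper bound : f ε ≤ h ε
      ( have hIntHi : IntervalIntegrable
            (fun t => (n : ℝ) * α * B * t ^ (α - 1) * (A + B * ε ^ α) ^ (n - 1) * (ε - t) ^ (-α))
            volume 0 ε := by
          have h := hbi.const_mul ((n : ℝ) * α * B * (A + B * ε ^ α) ^ (n - 1))
          convert h using 1
          funext t; ring
        have hmono := intervalIntegral.integral_mono_on hε.le hInt hIntHi (by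
          intro t ht
          have ht0 : (0:ℝ) ≤ t := ht.1
          have htε : t ^ α ≤ ε ^ α := Real.rpow_le_rpow ht0 ht.2 hα0.le
          have h1 : (A + B * t ^ α) ^ (n - 1) ≤ (A + B * ε ^ α) ^ (n - 1) :=
            pow_le_pow_left₀
              (by nlinarith [Real.rpow_nonneg ht0 α])
              (by nlinarith) _
          have hc : (0:ℝ) ≤ (n : ℝ) * α * B * t ^ (α - 1) :=
            mul_nonneg (by positivity) (Real.rpow_nonneg ht0 _)
          exact mul_le_mul_of_nonneg_right
            (mul_le_mul_of_nonneg_left h1 hc)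
            (Real.rpow_nonneg (by linarith [ht.2]) _))
        have heval : ∫ t in (0:ℝ)..ε,
            (n : ℝ) * α * B * t ^ (α - 1) * (A + B * ε ^ α) ^ (n - 1) * (ε - t) ^ (-α)
            = ((n : ℝ) * α * B * (A + B * ε ^ α) ^ (n - 1))
              * (Real.Gamma α * Real.Gamma (1 - α)) := by
          rw [show (fun t : ℝ => (n : ℝ) * α * B * t ^ (α - 1) * (A + B * ε ^ α) ^ (n - 1)
                * (ε - t) ^ (-α))
              = fun t : ℝ => ((n : ℝ) * α * B * (A + B * ε ^ α) ^ (n - 1))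
                * (t ^ (α - 1) * (ε - t) ^ (-α))
              from funext fun t => by ring] at hIntHi ⊢
          rw [intervalIntegral.integral_const_mul, hbv]
        rw [heval] at hmono
        have hrw : (n : ℝ) * α * Real.Gamma α * B * (A + B * ε ^ α) ^ (n - 1)
            = (1 / Real.Gamma (1 - α)) *
              (((n : ℝ) * α * B * (A + B * ε ^ α) ^ (n - 1))
                * (Real.Gamma α * Real.Gamma (1 - α))) := by
          field_simp
        rw [hrw]
        exact mul_le_mul_of_nonneg_left hmono (by positivity) ) }
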